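/- Preprojective matrix pencils have no eigenvectors: let n ≥ 2 and let P = (a, b; α₁, …, α_n) be a matrix pencil over a field k such that a < b, a² + b² − n·a·b = 1, and the associated n-Kronecker module (k^a, k^b; α₁, …, α_n) is indecomposable (i.e., whenever k^a = U₁ ⊕ W₁ and k^b = U₂ ⊕ W₂ with α_i(U₁) ⊆ U₂ and α_i(W₁) ⊆ W₂ for all i, then U₁ = 0 and U₂ = 0, or W₁ = 0 and W₂ = 0). Then P has no eigenvector: there is no nonzero v ∈ k^a for which the subspace ⟨α₁(v), …, α_n(v)⟩ of k^b is one-dimensional. -/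

import Mathlib

/-!
A matrix pencil `P = (a, b; α₁, …, α_n)` over `k` is a family of `n` linear maps
`α_i : k^a → k^b`, determining the `n`-Kronecker module `(k^a, k^b; α₁, …, α_n)`.
A nonzero `v ∈ k^a` is an eigenvector of `P` if `span{α₁(v), …, α_n(v)}` is
one-dimensional.  The module is indecomposable if whenever `k^a = U₁ ⊕ W₁` and
`k^b = U₂ ⊕ W₂` with `α_i(U₁) ⊆ U₂` and `α_i(W₁) ⊆ W₂` for all `i`, one of the
two summand pairs is zero.  An indecomposable pencil with `a < b` and
`a² + b² − n·a·b = 1` is preprojective.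
-/

open Module Submodule

set_option maxHeartbeats 2000000 in
/-- Auxiliary induction: the key lemma, proved by strong induction on `a` via the
reflection functor. -/
private lemma no_eigen_aux {k : Type*} [Field k] {n : ℕ} (hn : 2 ≤ n) :
    ∀ a : ℕ, ∀ (b : ℕ) (α : Fin n → ((Fin a → k) →ₗ[k] (Fin b → k))),
      a < b → ((a : ℤ) ^ 2 + (b : ℤ) ^ 2 - n * a * b = 1) →
      (∀ (U₁ W₁ : Submodule k (Fin a → k)) (U₂ W₂ : Submodule k (Fin b → k)),
        IsCompl U₁ W₁ → IsCompl U₂ W₂ →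
        (∀ i, U₁.map (α i) ≤ U₂) → (∀ i, W₁.map (α i) ≤ W₂) →
        (U₁ = ⊥ ∧ U₂ = ⊥) ∨ (W₁ = ⊥ ∧ W₂ = ⊥)) →
      ¬ ∃ v : Fin a → k, v ≠ 0 ∧
          finrank k (span k (Set.range fun i => α i v)) = 1 := by
  intro a
  induction a using Nat.strong_induction_on with
  | _ a IH =>
  rintro b α hab hroot hind ⟨v, hv, hspan⟩
  -- `a ≥ 1`, since otherwise there is no nonzero vector
  rcases Nat.eq_zero_or_pos a with ha0 | ha
  · subst ha0; exact hv (funext fun i => i.elim0)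
  -- Step 1: the images of the `α i` together span `k^b`
  obtain ⟨C, hC⟩ := Submodule.exists_isCompl (⨆ i, LinearMap.range (α i))
  have hsup : (⨆ i, LinearMap.range (α i)) = ⊤ := by
    rcases hind ⊤ ⊥ (⨆ i, LinearMap.range (α i)) C isCompl_top_bot hC
        (fun i => by rw [Submodule.map_top]; exact le_iSup (fun j => LinearMap.range (α j)) i)
        (fun i => by rw [Submodule.map_bot]; exact bot_le) with h | h
    · exfalso
      have : v ∈ (⊥ : Submodule k (Fin a → k)) := h.1 ▸ Submodule.mem_top
      exact hv ((Submodule.mem_bot k).mp this)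
    · have := hC.sup_eq_top
      rw [h.2, sup_bot_eq] at this
      exact this
  -- Step 2: find `μ ≠ 0` with `∑ μ i • α i v = 0`
  set L : (Fin n → k) →ₗ[k] (Fin b → k) :=
    Fintype.linearCombination k (fun i => α i v) with hLdef
  have hLrange : LinearMap.range L = span k (Set.range fun i => α i v) :=
    Fintype.range_linearCombination k (fun i => α i v)
  have hkerL : LinearMap.ker L ≠ ⊥ := by
    intro h
    have h2 := LinearMap.finrank_range_add_finrank_ker L
    rw [h, finrank_bot, hLrange, hspan] at h2
    have : finrank k (Fin n → k) = n := by simp [Module.finrank_pi]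
    omega
  obtain ⟨μ, hμK, hμne⟩ := Submodule.exists_mem_ne_zero_of_ne_bot hkerL
  have hμ : ∑ i, μ i • α i v = 0 := by
    have := LinearMap.mem_ker.mp hμK
    rwa [hLdef, Fintype.linearCombination_apply] at this
  -- Step 3: the reflection of the pencil
  set Φ : (Fin n → (Fin a → k)) →ₗ[k] (Fin b → k) :=
    ∑ i, (α i) ∘ₗ (LinearMap.proj i) with hΦdef
  have hΦ : ∀ y, Φ y = ∑ i, α i (y i) := by
    intro y
    rw [hΦdef, LinearMap.sum_apply]
    simp [LinearMap.comp_apply]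
  have hΦsingle : ∀ (i : Fin n) (x : Fin a → k), Φ (Pi.single i x) = α i x := by
    intro i x
    rw [hΦ, Finset.sum_eq_single i]
    · simp
    · intro j _ hj; rw [Pi.single_eq_of_ne hj, map_zero]
    · simp
  have hΦtop : LinearMap.range Φ = ⊤ := by
    rw [← top_le_iff, ← hsup, iSup_le_iff]
    intro i y hy
    obtain ⟨x, rfl⟩ := hy
    exact ⟨Pi.single i x, hΦsingle i x⟩
  -- numerics
  have ha1 : (1:ℤ) ≤ a := by exact_mod_cast ha
  have hab1 : (a:ℤ) + 1 ≤ b := by exact_mod_cast hab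
  have hba : b ≤ n * a := by
    have : (b:ℤ) ≤ n * a := by nlinarith [hroot, ha1, hab1]
    exact_mod_cast this
  have hnab : n * a < a + b := by
    have : (n:ℤ) * a < a + b := by nlinarith [hroot, ha1, hab1]
    exact_mod_cast this
  set a' : ℕ := n * a - b with ha'def
  have hdim : finrank k (Fin n → (Fin a → k)) = n * a := by
    rw [Module.finrank_pi_fintype]
    simp [Module.finrank_pi]
  have hK : finrank k (LinearMap.ker Φ) = a' := by
    have h2 := LinearMap.finrank_range_add_finrank_ker Φ
    rw [hΦtop, finrank_top, hdim] at h2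
    have hb' : finrank k (Fin b → k) = b := by simp [Module.finrank_pi]
    rw [hb'] at h2
    omega
  obtain ⟨e⟩ : Nonempty ((Fin a' → k) ≃ₗ[k] LinearMap.ker Φ) :=
    FiniteDimensional.nonempty_linearEquiv_of_finrank_eq
      (by rw [hK]; simp [Module.finrank_pi])
  set β : Fin n → ((Fin a' → k) →ₗ[k] (Fin a → k)) :=
    fun i => (LinearMap.proj i) ∘ₗ ((LinearMap.ker Φ).subtype ∘ₗ
      (e : (Fin a' → k) →ₗ[k] LinearMap.ker Φ)) with hβdef
  have hβ : ∀ (i : Fin n) (x : Fin a' → k),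
      β i x = (((e x : LinearMap.ker Φ) : Fin n → Fin a → k)) i := fun i x => rfl
  -- numerics for the reflected pencil
  have hab' : a' < a := by omega
  have ha'cast : (a' : ℤ) = n * a - b := by
    rw [ha'def]; push_cast [Nat.cast_sub hba]; ring
  have hroot' : (a' : ℤ) ^ 2 + (a : ℤ) ^ 2 - n * a' * a = 1 := by
    rw [ha'cast]; linear_combination hroot
  -- Step 4: indecomposability of the reflected pencil
  have hind' : ∀ (U₁ W₁ : Submodule k (Fin a' → k)) (U₂ W₂ : Submodule k (Fin a → k)),
      IsCompl U₁ W₁ → IsCompl U₂ W₂ →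
      (∀ i, U₁.map (β i) ≤ U₂) → (∀ i, W₁.map (β i) ≤ W₂) →
      (U₁ = ⊥ ∧ U₂ = ⊥) ∨ (W₁ = ⊥ ∧ W₂ = ⊥) := by
    intro U₁ W₁ U₂ W₂ hc1 hc2 hU hW
    set UU : Submodule k (Fin n → Fin a → k) := Submodule.pi Set.univ (fun _ => U₂) with hUUdef
    set WW : Submodule k (Fin n → Fin a → k) := Submodule.pi Set.univ (fun _ => W₂) with hWWdef
    have hsingleU : ∀ (i : Fin n) (y : Fin a → k), y ∈ U₂ → Pi.single i y ∈ UU := by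
      intro i y hy
      rw [hUUdef, Submodule.mem_pi]
      intro j _
      rcases eq_or_ne j i with rfl | hj
      · simpa using hy
      · rw [Pi.single_eq_of_ne hj]; exact Submodule.zero_mem _
    have hsingleW : ∀ (i : Fin n) (y : Fin a → k), y ∈ W₂ → Pi.single i y ∈ WW := by
      intro i y hy
      rw [hWWdef, Submodule.mem_pi]
      intro j _
      rcases eq_or_ne j i with rfl | hj
      · simpa using hy
      · rw [Pi.single_eq_of_ne hj]; exact Submodule.zero_mem _
    have hcompl : IsCompl (UU.map Φ) (WW.map Φ) := by
      constructor
      · rw [disjoint_def]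
        rintro x hxU hxW
        obtain ⟨uu, huu, rfl⟩ := hxU
        obtain ⟨ww, hww, hEq⟩ := hxW
        have hker : uu - ww ∈ LinearMap.ker Φ := by
          rw [LinearMap.mem_ker, map_sub, ← hEq, sub_self]
        set z : Fin a' → k := e.symm ⟨uu - ww, hker⟩ with hzdef
        obtain ⟨z₁, hz₁, z₂, hz₂, hzsum⟩ := Submodule.mem_sup.mp
          (show z ∈ U₁ ⊔ W₁ by rw [hc1.sup_eq_top]; trivial)
        have hez : ((e z : LinearMap.ker Φ) : Fin n → Fin a → k) = uu - ww := by
          rw [hzdef, e.apply_symm_apply]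
        have he1 : ∀ i, ((e z₁ : LinearMap.ker Φ) : Fin n → Fin a → k) i ∈ U₂ :=
          fun i => hU i ⟨z₁, hz₁, rfl⟩
        have he2 : ∀ i, ((e z₂ : LinearMap.ker Φ) : Fin n → Fin a → k) i ∈ W₂ :=
          fun i => hW i ⟨z₂, hz₂, rfl⟩
        have hsplit : ∀ i, uu i - ((e z₁ : LinearMap.ker Φ) : Fin n → Fin a → k) i
            = ww i + ((e z₂ : LinearMap.ker Φ) : Fin n → Fin a → k) i := by
          intro i
          have h3 : ((e z : LinearMap.ker Φ) : Fin n → Fin a → k)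
              = ((e z₁ : LinearMap.ker Φ) : Fin n → Fin a → k)
                + ((e z₂ : LinearMap.ker Φ) : Fin n → Fin a → k) := by
            rw [← hzsum, map_add]; rfl
          have h4 := congrFun hez i
          rw [h3] at h4
          simp only [Pi.add_apply, Pi.sub_apply] at h4
          have h6 := eq_add_of_sub_eq h4.symm
          rw [h6]; abel
        have huuz : uu = ((e z₁ : LinearMap.ker Φ) : Fin n → Fin a → k) := by
          funext i
          have h1 : uu i - ((e z₁ : LinearMap.ker Φ) : Fin n → Fin a → k) i ∈ U₂ := by
            have huui : uu i ∈ U₂ := by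
              have huu2 : uu ∈ Submodule.pi Set.univ (fun _ : Fin n => U₂) := huu
              exact Submodule.mem_pi.mp huu2 i (Set.mem_univ i)
            exact sub_mem huui (he1 i)
          have h2 : uu i - ((e z₁ : LinearMap.ker Φ) : Fin n → Fin a → k) i ∈ W₂ := by
            rw [hsplit i]
            have hwwi : ww i ∈ W₂ := by
              have hww2 : ww ∈ Submodule.pi Set.univ (fun _ : Fin n => W₂) := hww
              exact Submodule.mem_pi.mp hww2 i (Set.mem_univ i)
            exact add_mem hwwi (he2 i)
          have h5 := disjoint_def.mp hc2.disjoint _ h1 h2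
          exact sub_eq_zero.mp h5
        rw [huuz]
        exact LinearMap.mem_ker.mp (e z₁).2
      · rw [codisjoint_iff, ← Submodule.map_sup]
        have hsup2 : UU ⊔ WW = ⊤ := by
          rw [eq_top_iff]
          intro y _
          have hy : ∀ i, ∃ u ∈ U₂, ∃ w ∈ W₂, u + w = y i := by
            intro i
            exact Submodule.mem_sup.mp (show y i ∈ U₂ ⊔ W₂ by rw [hc2.sup_eq_top]; trivial)
          choose u hu w hw huw using hy
          refine Submodule.mem_sup.mpr ⟨u, ?_, w, ?_, ?_⟩
          · rw [hUUdef, Submodule.mem_pi]; exact fun i _ => hu i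
          · rw [hWWdef, Submodule.mem_pi]; exact fun i _ => hw i
          · funext i; exact huw i
        rw [hsup2, Submodule.map_top, hΦtop]
    have hmapU : ∀ i, U₂.map (α i) ≤ UU.map Φ := by
      intro i x hx
      obtain ⟨y, hy, rfl⟩ := hx
      exact ⟨Pi.single i y, hsingleU i y hy, hΦsingle i y⟩
    have hmapW : ∀ i, W₂.map (α i) ≤ WW.map Φ := by
      intro i x hx
      obtain ⟨y, hy, rfl⟩ := hx
      exact ⟨Pi.single i y, hsingleW i y hy, hΦsingle i y⟩
    rcases hind U₂ W₂ (UU.map Φ) (WW.map Φ) hc2 hcompl hmapU hmapW with h | h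
    · left
      refine ⟨?_, h.1⟩
      rw [eq_bot_iff]
      intro x hx
      have hcomps : ∀ i, β i x ∈ U₂ := fun i => hU i ⟨x, hx, rfl⟩
      have hzero : ((e x : LinearMap.ker Φ) : Fin n → Fin a → k) = 0 := by
        funext i
        have := hcomps i
        rw [h.1, Submodule.mem_bot] at this
        exact this
      have hex : e x = 0 := Subtype.ext hzero
      rw [Submodule.mem_bot]
      exact e.map_eq_zero_iff.mp hex
    · right
      refine ⟨?_, h.1⟩
      rw [eq_bot_iff]
      intro x hx
      have hcomps : ∀ i, β i x ∈ W₂ := fun i => hW i ⟨x, hx, rfl⟩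
      have hzero : ((e x : LinearMap.ker Φ) : Fin n → Fin a → k) = 0 := by
        funext i
        have := hcomps i
        rw [h.1, Submodule.mem_bot] at this
        exact this
      have hex : e x = 0 := Subtype.ext hzero
      rw [Submodule.mem_bot]
      exact e.map_eq_zero_iff.mp hex
  -- Step 5: the reflected pencil has an eigenvector
  have hu'K : (fun i => μ i • v) ∈ LinearMap.ker Φ := by
    rw [LinearMap.mem_ker, hΦ]
    simpa [map_smul] using hμ
  set u : Fin a' → k := e.symm ⟨fun i => μ i • v, hu'K⟩ with hudef
  have hβu : ∀ i, β i u = μ i • v := by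
    intro i
    rw [hβ, hudef, e.apply_symm_apply]
  have hu0 : u ≠ 0 := by
    intro h
    have hsub : (⟨fun i => μ i • v, hu'K⟩ : LinearMap.ker Φ) = 0 := by
      rw [hudef] at h
      exact e.symm.map_eq_zero_iff.mp h
    have hfn : (fun i => μ i • v) = (0 : Fin n → Fin a → k) := congrArg Subtype.val hsub
    apply hμne
    funext i
    have := congrFun hfn i
    rcases smul_eq_zero.mp this with h' | h'
    · exact h'
    · exact absurd h' hv
  obtain ⟨i₀, hi₀⟩ := Function.ne_iff.mp hμne
  have hi₀ : μ i₀ ≠ 0 := hi₀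
  have hspan' : span k (Set.range fun i => β i u) = span k {v} := by
    apply le_antisymm
    · rw [span_le]
      rintro x ⟨i, rfl⟩
      simp only [SetLike.mem_coe]
      rw [hβu]
      exact Submodule.smul_mem _ _ (Submodule.mem_span_singleton_self v)
    · rw [span_le, Set.singleton_subset_iff]
      simp only [SetLike.mem_coe]
      have hvrw : v = (μ i₀)⁻¹ • (β i₀ u) := by
        rw [hβu, smul_smul, inv_mul_cancel₀ hi₀, one_smul]
      rw [hvrw]
      exact Submodule.smul_mem _ _ (Submodule.subset_span ⟨i₀, rfl⟩)
  exact IH a' hab' a β hab' hroot' hind'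
    ⟨u, hu0, by rw [hspan']; exact finrank_span_singleton hv⟩

/-- for `n ≥ 2`, a preprojective matrix pencil (an indecomposable
pencil `P = (a, b; α₁, …, α_n)` with `a < b` and `a² + b² − n·a·b = 1`) has no
eigenvector: there is no nonzero `v ∈ k^a` with `span{α₁(v), …, α_n(v)}`
one-dimensional. -/
theorem preprojective_pencil_has_no_eigenvectors
    {k : Type*} [Field k] {n a b : ℕ} (hn : 2 ≤ n)
    (α : Fin n → ((Fin a → k) →ₗ[k] (Fin b → k)))
    (hab : a < b)
    (hroot : (a : ℤ) ^ 2 + (b : ℤ) ^ 2 - n * a * b = 1)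
    (hind : ∀ (U₁ W₁ : Submodule k (Fin a → k)) (U₂ W₂ : Submodule k (Fin b → k)),
      IsCompl U₁ W₁ → IsCompl U₂ W₂ →
      (∀ i, U₁.map (α i) ≤ U₂) → (∀ i, W₁.map (α i) ≤ W₂) →
      (U₁ = ⊥ ∧ U₂ = ⊥) ∨ (W₁ = ⊥ ∧ W₂ = ⊥)) :
    ¬ ∃ v : Fin a → k, v ≠ 0 ∧
        finrank k (span k (Set.range fun i => α i v)) = 1 := by
  exact no_eigen_aux hn a b α hab hroot hind
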